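/- Let ℐ = (α,β) be an open interval, h₁ : ℐ → (0,∞) continuous and strictly increasing, h₂ : ℐ → (0,∞) continuously differentiable and strictly decreasing, σ, S', H : ℐ → (0,∞) continuous, L : ℐ → ℝ continuous, R : ℐ → ℝ continuously differentiable, G : ℐ → ℝ continuous, and γ > 0 a constant. For x < m' in ℐ define D(x,m') = h₁(m')h₂(x) − h₁(x)h₂(m') and E(x,m') = (H(m')σ²(x)/(2L(x)h₂(x)))·{ (γS'(x)/D(x,m'))·[R(x)h₂(m') − G(m')h₂(x)] + R'(x)h₂(x) − R(x)h₂'(x) }. If m ∈ ℐ satisfies L(m) < 0 and G(m) > R(m), then E(x,m') → +∞ as (x,m') → (m,m) with x < m'. -/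

import Mathlib

open Set Filter

/-- explosion of the vector field at the diagonal, paper's Lemma 3:
if `m ∈ ℐ` satisfies `L(m) < 0` and `G(m) > R(m)`, then `E(x,m') → +∞` as
`(x,m') → (m,m)` with `x < m'` in `ℐ`. -/
theorem stmt_9
    (α β : ℝ) (I : Set ℝ) (hI : I = Ioo α β)
    (h₁ h₂ h₂' σ S' H L R R' G : ℝ → ℝ) (γ : ℝ) (hγ : 0 < γ)
    (h₁cont : ContinuousOn h₁ I) (h₁mono : StrictMonoOn h₁ I)
    (h₁pos : ∀ x ∈ I, 0 < h₁ x)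
    (h₂diff : ∀ x ∈ I, HasDerivAt h₂ (h₂' x) x) (h₂'cont : ContinuousOn h₂' I)
    (h₂anti : StrictAntiOn h₂ I) (h₂pos : ∀ x ∈ I, 0 < h₂ x)
    (hσcont : ContinuousOn σ I) (hσpos : ∀ x ∈ I, 0 < σ x)
    (hS'cont : ContinuousOn S' I) (hS'pos : ∀ x ∈ I, 0 < S' x)
    (hHcont : ContinuousOn H I) (hHpos : ∀ x ∈ I, 0 < H x)
    (hLcont : ContinuousOn L I)
    (hRdiff : ∀ x ∈ I, HasDerivAt R (R' x) x) (hR'cont : ContinuousOn R' I)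
    (hGcont : ContinuousOn G I)
    (D E : ℝ → ℝ → ℝ)
    (hD : ∀ x m', D x m' = h₁ m' * h₂ x - h₁ x * h₂ m')
    (hE : ∀ x m', x ∈ I → m' ∈ I → x < m' →
      E x m' = (H m' * σ x ^ 2 / (2 * L x * h₂ x)) *
        ((γ * S' x / D x m') * (R x * h₂ m' - G m' * h₂ x) + R' x * h₂ x - R x * h₂' x))
    (m : ℝ) (hm : m ∈ I) (hLm : L m < 0) (hGR : R m < G m) :
    Tendsto (fun p : ℝ × ℝ => E p.1 p.2)
      (nhdsWithin (m, m) {p : ℝ × ℝ | p.1 ∈ I ∧ p.2 ∈ I ∧ p.1 < p.2})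
      atTop := by
  set S : Set (ℝ × ℝ) := {p : ℝ × ℝ | p.1 ∈ I ∧ p.2 ∈ I ∧ p.1 < p.2} with hS
  set F : Filter (ℝ × ℝ) := nhdsWithin (m, m) S with hF
  have hmemS : ∀ᶠ p in F, p ∈ S := eventually_mem_nhdsWithin
  -- projections tend to m within I
  have hfst : Tendsto (fun p : ℝ × ℝ => p.1) F (nhdsWithin m I) := by
    apply tendsto_nhdsWithin_of_tendsto_nhds_of_eventually_within
    · exact (continuous_fst.tendsto (m, m)).mono_left nhdsWithin_le_nhds
    · exact hmemS.mono fun p hp => hp.1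
  have hsnd : Tendsto (fun p : ℝ × ℝ => p.2) F (nhdsWithin m I) := by
    apply tendsto_nhdsWithin_of_tendsto_nhds_of_eventually_within
    · exact (continuous_snd.tendsto (m, m)).mono_left nhdsWithin_le_nhds
    · exact hmemS.mono fun p hp => hp.2.1
  -- continuity of h₂ and R on I
  have h₂cont : ContinuousOn h₂ I := fun x hx =>
    ((h₂diff x hx).continuousAt).continuousWithinAt
  have hRcont : ContinuousOn R I := fun x hx =>
    ((hRdiff x hx).continuousAt).continuousWithinAt
  -- generic limits along F
  have lim1 : ∀ (φ : ℝ → ℝ), ContinuousOn φ I →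
      Tendsto (fun p : ℝ × ℝ => φ p.1) F (nhds (φ m)) := fun φ hφ =>
    (hφ m hm).tendsto.comp hfst
  have lim2 : ∀ (φ : ℝ → ℝ), ContinuousOn φ I →
      Tendsto (fun p : ℝ × ℝ => φ p.2) F (nhds (φ m)) := fun φ hφ =>
    (hφ m hm).tendsto.comp hsnd
  -- D tends to 0 within (0, ∞)
  have hDpos : ∀ᶠ p in F, 0 < D p.1 p.2 := by
    refine hmemS.mono fun p hp => ?_
    obtain ⟨hx, hm', hlt⟩ := hp
    rw [hD]
    have h1 : h₁ p.1 < h₁ p.2 := h₁mono hx hm' hlt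
    have h2 : h₂ p.2 < h₂ p.1 := h₂anti hx hm' hlt
    nlinarith [h₁pos p.1 hx, h₁pos p.2 hm', h₂pos p.1 hx, h₂pos p.2 hm']
  have hD0 : Tendsto (fun p : ℝ × ℝ => D p.1 p.2) F (nhds 0) := by
    have : Tendsto (fun p : ℝ × ℝ => h₁ p.2 * h₂ p.1 - h₁ p.1 * h₂ p.2) F
        (nhds (h₁ m * h₂ m - h₁ m * h₂ m)) :=
      ((lim2 h₁ h₁cont).mul (lim1 h₂ h₂cont)).sub ((lim1 h₁ h₁cont).mul (lim2 h₂ h₂cont))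
    simpa only [hD, sub_self] using this
  have hDinv : Tendsto (fun p : ℝ × ℝ => (D p.1 p.2)⁻¹) F atTop := by
    apply Filter.Tendsto.inv_tendsto_nhdsGT_zero
    exact tendsto_nhdsWithin_of_tendsto_nhds_of_eventually_within _ hD0 hDpos
  -- the numerator tends to a negative constant
  have hbneg : γ * S' m * (R m * h₂ m - G m * h₂ m) < 0 := by
    have h1 : 0 < γ * S' m := mul_pos hγ (hS'pos m hm)
    have h2 : R m * h₂ m - G m * h₂ m < 0 := by nlinarith [h₂pos m hm]
    exact mul_neg_of_pos_of_neg h1 h2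
  have hNum : Tendsto (fun p : ℝ × ℝ => γ * S' p.1 * (R p.1 * h₂ p.2 - G p.2 * h₂ p.1)) F
      (nhds (γ * S' m * (R m * h₂ m - G m * h₂ m))) :=
    ((tendsto_const_nhds.mul (lim1 S' hS'cont)).mul
      (((lim1 R hRcont).mul (lim2 h₂ h₂cont)).sub ((lim2 G hGcont).mul (lim1 h₂ h₂cont))))
  have hfrac : Tendsto (fun p : ℝ × ℝ =>
      γ * S' p.1 * (R p.1 * h₂ p.2 - G p.2 * h₂ p.1) * (D p.1 p.2)⁻¹) F atBot :=
    Filter.Tendsto.neg_mul_atTop hbneg hNum hDinv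
  -- the remainder tends to a constant
  have hC : Tendsto (fun p : ℝ × ℝ => R' p.1 * h₂ p.1 - R p.1 * h₂' p.1) F
      (nhds (R' m * h₂ m - R m * h₂' m)) :=
    ((lim1 R' hR'cont).mul (lim1 h₂ h₂cont)).sub ((lim1 R hRcont).mul (lim1 h₂' h₂'cont))
  have hsum : Tendsto (fun p : ℝ × ℝ =>
      γ * S' p.1 * (R p.1 * h₂ p.2 - G p.2 * h₂ p.1) * (D p.1 p.2)⁻¹ +
        (R' p.1 * h₂ p.1 - R p.1 * h₂' p.1)) F atBot := by
    refine tendsto_atBot_add_right_of_ge' F (R' m * h₂ m - R m * h₂' m + 1) hfrac ?_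
    exact hC.eventually (eventually_le_nhds (lt_add_one _))
  -- the prefactor tends to a negative constant
  have hdenom_ne : 2 * L m * h₂ m ≠ 0 := by
    have := h₂pos m hm; nlinarith
  have haneg : H m * σ m ^ 2 / (2 * L m * h₂ m) < 0 := by
    apply div_neg_of_pos_of_neg
    · have := hHpos m hm; have := hσpos m hm; positivity
    · have := h₂pos m hm; nlinarith
  have hA : Tendsto (fun p : ℝ × ℝ => H p.2 * σ p.1 ^ 2 / (2 * L p.1 * h₂ p.1)) F
      (nhds (H m * σ m ^ 2 / (2 * L m * h₂ m))) :=
    ((lim2 H hHcont).mul ((lim1 σ hσcont).pow 2)).div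
      ((tendsto_const_nhds.mul (lim1 L hLcont)).mul (lim1 h₂ h₂cont)) hdenom_ne
  have hmain : Tendsto (fun p : ℝ × ℝ =>
      (H p.2 * σ p.1 ^ 2 / (2 * L p.1 * h₂ p.1)) *
        (γ * S' p.1 * (R p.1 * h₂ p.2 - G p.2 * h₂ p.1) * (D p.1 p.2)⁻¹ +
          (R' p.1 * h₂ p.1 - R p.1 * h₂' p.1))) F atTop :=
    Filter.Tendsto.neg_mul_atBot haneg hA hsum
  refine hmain.congr' ?_
  filter_upwards [hmemS] with p hp
  obtain ⟨hx, hm', hlt⟩ := hp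
  rw [hE p.1 p.2 hx hm' hlt]
  ring
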